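/- Let N ≥ 2, k ≥ 1, m ≤ k, and let λ = m·λ_1. Let μ be a level-k dominant weight of A_{N-1} with partition (μ) ⊆ (N-1)×k rectangle, and ν another level-k dominant weight. Then the fusion coefficient N_{μ,λ}^{(k)ν} equals the orbit multiplicity M_{[μ],[λ]}^{(k)[ν]}, where [μ],[λ],[ν] are the S_k-orbits of (Z/N)^k corresponding to μ, λ, ν. Here N_{μ,λ}^{(k)ν} is characterized as being 1 if there exists a partition (ν̄) contained in the N×k rectangle such that (ν̄)/(μ) is a horizontal m-strip and ν̄ differs from (ν) by adding a constant to all N parts, and 0 otherwise. -/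

import Mathlib

/-- The `S_k`-orbit of a `k`-tuple with entries in `ZMod N`. -/
def orb {N k : ℕ} (x : Fin k → ZMod N) : Set (Fin k → ZMod N) :=
  {y | ∃ σ : Equiv.Perm (Fin k), y = x ∘ σ}

/-- The set `T([a],[b],[c])` of triples `(x,y,z) ∈ [a]×[b]×[c]` with `x + y = z`. -/
def Triples {N k : ℕ} (a b c : Fin k → ZMod N) :=
  {p : (Fin k → ZMod N) × (Fin k → ZMod N) × (Fin k → ZMod N) //
    p.1 ∈ orb a ∧ p.2.1 ∈ orb b ∧ p.2.2 ∈ orb c ∧ p.1 + p.2.1 = p.2.2}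

/-- The orbit multiplicity `M_{[a],[b]}^{(k)[c]}`: the number of `S_k`-orbits of
`T([a],[b],[c])` under the diagonal action. -/
noncomputable def Mcoef {N k : ℕ} (a b c : Fin k → ZMod N) : ℕ :=
  Nat.card (Quot (fun p q : Triples a b c =>
    ∃ σ : Equiv.Perm (Fin k),
      q.1.1 = p.1.1 ∘ σ ∧ q.1.2.1 = p.1.2.1 ∘ σ ∧ q.1.2.2 = p.1.2.2 ∘ σ))

/-- The `k`-tuple in `(ZMod N)^k` corresponding to a level-`k` weight with
partition `p`: entry `q` is the height of the `(q+1)`-st column of the diagram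
of `p` (the standard representative of the associated orbit). -/
def tupleOf {N : ℕ} (k : ℕ) (p : Fin N → ℕ) : Fin k → ZMod N :=
  fun q => ((Finset.univ.filter fun i : Fin N => (q : ℕ) < p i).card : ZMod N)

open Finset

/-- Fusion coefficients for `λ = m·λ_1` equal orbit multiplicities.  Let `μ, ν`
be level-`k` dominant weights of `A_{N-1}` with partitions `pμ, pν ⊆ (N-1)×k`
(encoded with `N` parts, last part `0`).  The fusion coefficient
`N_{μ,λ}^{(k)ν}` is `1` if there is a partition `ν̄ ⊆ N×k` with `ν̄/pμ` a
horizontal `m`-strip and `ν̄` equal to `pν` plus a constant in each part, and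
`0` otherwise; in either case it equals `M_{[μ],[λ]}^{(k)[ν]}`, where
`[μ], [ν]` are the orbits of the tuples of `pμ, pν` and `[λ]` that of
`(1^m, 0^{k-m})`. -/
lemma cardlt (k : ℕ) {j : ℕ} (hj : j ≤ k) :
    (Finset.univ.filter fun q : Fin k => (q : ℕ) < j).card = j := by
  classical
  rw [show j = (Finset.range j).card from (Finset.card_range j).symm]
  apply Finset.card_nbij (i := Fin.val)
  · intro a ha; simp at ha ⊢; omega
  · intro a _ b _ h; exact Fin.ext h
  · intro v hv; simp at hv ⊢
    exact ⟨⟨v, lt_of_lt_of_le hv hj⟩, hv, rfl⟩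

lemma cnt_comp {k : ℕ} (σ : Equiv.Perm (Fin k)) (P : Fin k → Prop) [DecidablePred P] :
    (Finset.univ.filter fun q => P (σ q)).card = (Finset.univ.filter P).card := by
  classical
  apply Finset.card_bij' (i := fun q _ => σ q) (j := fun q _ => σ.symm q) <;>
    intro a ha <;> simp_all

lemma engine {k : ℕ} {β : Type*} [DecidableEq β] (f g : Fin k → β)
    (h : ∀ v, (Finset.univ.filter fun q => f q = v).card
            = (Finset.univ.filter fun q => g q = v).card) :
    ∃ σ : Equiv.Perm (Fin k), f ∘ σ = g := by
  classical
  have E : ∀ v : β, {q // f q = v} ≃ {q // g q = v} := fun v =>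
    Fintype.equivOfCardEq (by classical simpa [Fintype.card_subtype] using h v)
  refine ⟨(Equiv.sigmaFiberEquiv g).symm.trans
    ((Equiv.sigmaCongrRight fun v => (E v).symm).trans (Equiv.sigmaFiberEquiv f)), ?_⟩
  funext q
  have := ((E (g q)).symm ⟨q, rfl⟩).2
  simpa [Equiv.sigmaFiberEquiv, Equiv.sigmaCongrRight] using this

lemma duality {N : ℕ} {p : Fin N → ℕ} (hp : ∀ i j : Fin N, i ≤ j → p j ≤ p i)
    (i : Fin N) (q : ℕ) :
    (i : ℕ) < (Finset.univ.filter fun j => q < p j).card ↔ q < p i := by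
  classical
  constructor
  · intro h
    by_contra hq
    have hsub : (Finset.univ.filter fun j => q < p j) ⊆
        (Finset.univ.filter fun j : Fin N => (j : ℕ) < (i : ℕ)) := by
      intro j hj
      simp only [mem_filter, mem_univ, true_and] at hj ⊢
      by_contra hji
      exact hq (lt_of_lt_of_le hj (hp i j (by exact Fin.le_def.mpr (by omega))))
    have := Finset.card_le_card hsub
    rw [cardlt N (le_of_lt i.isLt)] at this
    omega
  · intro h
    have hsub : (Finset.univ.filter fun j : Fin N => (j : ℕ) < (i : ℕ) + 1) ⊆
        (Finset.univ.filter fun j => q < p j) := by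
      intro j hj
      simp only [mem_filter, mem_univ, true_and] at hj ⊢
      exact lt_of_lt_of_le h (hp j i (Fin.le_def.mpr (by omega)))
    have := Finset.card_le_card hsub
    rw [cardlt N (by omega : (i:ℕ)+1 ≤ N)] at this
    omega

/-- Double counting: sum of column heights equals sum of parts. -/
lemma colsum {N k : ℕ} (p : Fin N → ℕ) (hpk : ∀ i, p i ≤ k) :
    ∑ q : Fin k, (Finset.univ.filter fun i : Fin N => (q : ℕ) < p i).card = ∑ i, p i := by
  classical
  simp_rw [Finset.card_filter]
  rw [Finset.sum_comm]
  apply Finset.sum_congr rfl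
  intro i _
  rw [← Finset.card_filter, cardlt k (hpk i)]

/-- Sum over `Fin N` of row counts of a height function bounded by `N`. -/
lemma rowsum {N k : ℕ} (h : Fin k → ℕ) (hh : ∀ q, h q ≤ N) :
    ∑ i : Fin N, (Finset.univ.filter fun q : Fin k => (i : ℕ) < h q).card = ∑ q, h q := by
  classical
  simp_rw [Finset.card_filter]
  rw [Finset.sum_comm]
  apply Finset.sum_congr rfl
  intro q _
  rw [← Finset.card_filter, cardlt N (hh q)]

lemma reconstruct {N k m : ℕ} (hN : 2 ≤ N) (hk : 1 ≤ k) (hm : m ≤ k)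
    (pμ pν : Fin N → ℕ)
    (hμa : ∀ i j : Fin N, i ≤ j → pμ j ≤ pμ i)
    (hμlast : pμ ⟨N - 1, Nat.sub_lt (by omega) Nat.one_pos⟩ = 0) (hμk : ∀ i, pμ i ≤ k)
    (hνa : ∀ i j : Fin N, i ≤ j → pν j ≤ pν i)
    (hνlast : pν ⟨N - 1, Nat.sub_lt (by omega) Nat.one_pos⟩ = 0) (hνk : ∀ i, pν i ≤ k)
    (y : Fin k → ZMod N)
    (hy : ∃ ρ : Equiv.Perm (Fin k),
      y = (fun i : Fin k => if (i : ℕ) < m then (1 : ZMod N) else 0) ∘ ρ)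
    (hz : ∃ τ : Equiv.Perm (Fin k), tupleOf k pμ + y = tupleOf k pν ∘ τ) :
    ∃ νbar : Fin N → ℕ,
        (∀ i j : Fin N, i ≤ j → νbar j ≤ νbar i) ∧ (∀ i, νbar i ≤ k) ∧
        (∀ i, pμ i ≤ νbar i) ∧ (∑ i, (νbar i - pμ i)) = m ∧
        (∀ i j : Fin N, (i : ℕ) + 1 = (j : ℕ) → νbar j ≤ pμ i) ∧
        ∃ c : ℕ, ∀ i, νbar i = pν i + c := by
  classical
  haveI : NeZero N := ⟨by omega⟩
  have h01 : (0 : ZMod N) ≠ 1 := by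
    haveI : Fact (1 < N) := ⟨by omega⟩
    exact zero_ne_one
  obtain ⟨ρ, hρ⟩ := hy
  obtain ⟨τ, hτ⟩ := hz
  set A : Fin k → ℕ := fun q => (Finset.univ.filter fun i : Fin N => (q : ℕ) < pμ i).card
    with hA
  set C : Fin k → ℕ := fun q => (Finset.univ.filter fun i : Fin N => (q : ℕ) < pν i).card
    with hC
  have hval : ∀ q, y q = 0 ∨ y q = 1 := by
    intro q; rw [hρ]; simp only [Function.comp]; split <;> simp
  set e : Fin k → ℕ := fun q => if y q = 1 then 1 else 0 with he
  have hecast : ∀ q, (e q : ZMod N) = y q := by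
    intro q
    rcases hval q with h0 | h0 <;> simp [he, h0, h01]
  have he1 : ∀ q, e q ≤ 1 := by intro q; simp only [he]; split <;> omega
  have hAlt : ∀ q, A q < N := by
    intro q
    have hmem : (⟨N - 1, by omega⟩ : Fin N) ∉
        (Finset.univ.filter fun i : Fin N => (q : ℕ) < pμ i) := by
      simp [hμlast]
    have h1 := Finset.card_lt_card
      ((Finset.ssubset_iff_of_subset (Finset.subset_univ _)).mpr
        ⟨_, Finset.mem_univ _, hmem⟩)
    simpa using h1
  have hClt : ∀ q, C q < N := by
    intro q
    have hmem : (⟨N - 1, by omega⟩ : Fin N) ∉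
        (Finset.univ.filter fun i : Fin N => (q : ℕ) < pν i) := by
      simp [hνlast]
    have h1 := Finset.card_lt_card
      ((Finset.ssubset_iff_of_subset (Finset.subset_univ _)).mpr
        ⟨_, Finset.mem_univ _, hmem⟩)
    simpa using h1
  set h : Fin k → ℕ := fun q => A q + e q with hhdef
  have hhN : ∀ q, h q ≤ N := by intro q; have := hAlt q; have := he1 q; simp only [hhdef]; omega
  refine ⟨fun i => (Finset.univ.filter fun q : Fin k => (i : ℕ) < h q).card, ?_, ?_, ?_, ?_, ?_, ?_⟩
  · -- antitone
    intro i j hij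
    apply Finset.card_le_card
    intro q hq
    simp only [Finset.mem_filter, Finset.mem_univ, true_and] at hq ⊢
    have : (i : ℕ) ≤ (j : ℕ) := hij
    omega
  · -- ≤ k
    intro i
    calc (Finset.univ.filter fun q : Fin k => (i : ℕ) < h q).card
        ≤ (Finset.univ : Finset (Fin k)).card := Finset.card_filter_le _ _
      _ = k := by simp
  · -- pμ ≤ νbar
    intro i
    have h1 : pμ i = (Finset.univ.filter fun q : Fin k => (q : ℕ) < pμ i).card :=
      (cardlt k (hμk i)).symm
    rw [h1]
    apply Finset.card_le_card
    intro q hq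
    simp only [Finset.mem_filter, Finset.mem_univ, true_and] at hq ⊢
    have h2 : (i : ℕ) < A q := (duality hμa i (q : ℕ)).mpr hq
    simp only [hhdef]; omega
  · -- sum = m
    have hle : ∀ i ∈ Finset.univ, pμ i ≤ (Finset.univ.filter fun q : Fin k => (i : ℕ) < h q).card := by
      intro i _
      have h1 : pμ i = (Finset.univ.filter fun q : Fin k => (q : ℕ) < pμ i).card :=
        (cardlt k (hμk i)).symm
      rw [h1]
      apply Finset.card_le_card
      intro q hq
      simp only [Finset.mem_filter, Finset.mem_univ, true_and] at hq ⊢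
      have h2 : (i : ℕ) < A q := (duality hμa i (q : ℕ)).mpr hq
      simp only [hhdef]; omega
    rw [Finset.sum_tsub_distrib _ hle, rowsum h hhN]
    have hsume : ∑ q, e q = m := by
      have h1 : ∑ q, e q = (Finset.univ.filter fun q => y q = 1).card := by
        rw [Finset.card_filter]
      have h2 : (Finset.univ.filter fun q => y q = 1).card
          = (Finset.univ.filter fun q : Fin k =>
              (if (q : ℕ) < m then (1 : ZMod N) else 0) = 1).card := by
        rw [hρ]
        exact cnt_comp ρ (fun q => (if (q : ℕ) < m then (1 : ZMod N) else 0) = 1)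
      have h3 : (Finset.univ.filter fun q : Fin k =>
          (if (q : ℕ) < m then (1 : ZMod N) else 0) = 1).card
          = (Finset.univ.filter fun q : Fin k => (q : ℕ) < m).card := by
        congr 1
        apply Finset.filter_congr
        intro q _
        constructor
        · intro hq; by_contra hqm; rw [if_neg hqm] at hq; exact h01 hq
        · intro hq; rw [if_pos hq]
      rw [h1, h2, h3, cardlt k hm]
    have hsumh : ∑ q, h q = (∑ i, pμ i) + m := by
      simp only [hhdef]
      rw [Finset.sum_add_distrib, hsume, ← hA]
      congr 1
      exact colsum pμ hμk
    rw [hsumh]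
    omega
  · -- horizontal strip
    intro i j hij
    have h1 : pμ i = (Finset.univ.filter fun q : Fin k => (q : ℕ) < pμ i).card :=
      (cardlt k (hμk i)).symm
    rw [h1]
    apply Finset.card_le_card
    intro q hq
    simp only [Finset.mem_filter, Finset.mem_univ, true_and] at hq ⊢
    rw [← duality hμa i (q : ℕ)]
    have hAq : (Finset.univ.filter fun j : Fin N => (q : ℕ) < pμ j).card = A q := rfl
    rw [hAq]
    have := he1 q
    simp only [hhdef] at hq
    omega
  · -- constant
    refine ⟨(Finset.univ.filter fun q => h q = N).card, ?_⟩
    intro i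
    show (Finset.univ.filter fun q : Fin k => (i : ℕ) < h q).card
      = pν i + (Finset.univ.filter fun q => h q = N).card
    have hsplit : ((Finset.univ.filter fun q : Fin k => (i : ℕ) < h q).filter fun q => h q = N).card
        + ((Finset.univ.filter fun q : Fin k => (i : ℕ) < h q).filter fun q => ¬ h q = N).card
        = (Finset.univ.filter fun q : Fin k => (i : ℕ) < h q).card :=
      Finset.card_filter_add_card_filter_not _
    have e1 : ((Finset.univ.filter fun q : Fin k => (i : ℕ) < h q).filter fun q => h q = N)
        = Finset.univ.filter fun q => h q = N := by
      rw [Finset.filter_filter]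
      apply Finset.filter_congr
      intro q _
      have := i.isLt
      constructor
      · exact fun hh => hh.2
      · intro hh; exact ⟨by omega, hh⟩
    have e2 : ((Finset.univ.filter fun q : Fin k => (i : ℕ) < h q).filter fun q => ¬ h q = N).card
        = pν i := by
      have hcast : ∀ q, ((h q : ℕ) : ZMod N) = (tupleOf k pμ + y) q := by
        intro q
        simp only [hhdef, Pi.add_apply, tupleOf]
        push_cast
        rw [hecast q]
      have e3 : ((Finset.univ.filter fun q : Fin k => (i : ℕ) < h q).filter fun q => ¬ h q = N)
          = Finset.univ.filter fun q => (i : ℕ) < ((tupleOf k pμ + y) q).val := by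
        rw [Finset.filter_filter]
        apply Finset.filter_congr
        intro q _
        rw [← hcast q]
        constructor
        · rintro ⟨h1, h2⟩
          rw [ZMod.val_cast_of_lt (by have := hhN q; omega)]
          exact h1
        · intro h1
          by_cases h2 : h q = N
          · rw [h2] at h1; rw [ZMod.natCast_self] at h1; simp at h1
          · rw [ZMod.val_cast_of_lt (by have := hhN q; omega)] at h1
            exact ⟨h1, h2⟩
      rw [e3, hτ]
      have e4 : (Finset.univ.filter fun q => (i : ℕ) < ((tupleOf k pν ∘ τ) q).val).card
          = (Finset.univ.filter fun q => (i : ℕ) < ((tupleOf k pν) q).val).card :=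
        cnt_comp τ (fun q => (i : ℕ) < ((tupleOf k pν) q).val)
      rw [e4]
      have e5 : (Finset.univ.filter fun q => (i : ℕ) < ((tupleOf k pν) q).val)
          = Finset.univ.filter fun q : Fin k => (q : ℕ) < pν i := by
        apply Finset.filter_congr
        intro q _
        have hv : ((tupleOf k pν) q).val = C q := by
          simp only [tupleOf, ← hC]
          exact ZMod.val_cast_of_lt (hClt q)
        rw [hv, hC]
        exact duality hνa i (q : ℕ)
      rw [e5, cardlt k (hνk i)]
    rw [e1] at hsplit
    rw [e2] at hsplit
    omega

lemma uniq {N k m : ℕ} (hN : 2 ≤ N) (a y y' : Fin k → ZMod N)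
    (hy : ∃ ρ : Equiv.Perm (Fin k),
      y = (fun i : Fin k => if (i : ℕ) < m then (1 : ZMod N) else 0) ∘ ρ)
    (hy' : ∃ ρ : Equiv.Perm (Fin k),
      y' = (fun i : Fin k => if (i : ℕ) < m then (1 : ZMod N) else 0) ∘ ρ)
    (hz : ∀ v : ZMod N, (Finset.univ.filter fun q => a q + y q = v).card
        = (Finset.univ.filter fun q => a q + y' q = v).card) :
    ∃ σ : Equiv.Perm (Fin k), a ∘ σ = a ∧ y ∘ σ = y' := by
  classical
  haveI : NeZero N := ⟨by omega⟩
  have h01 : (0 : ZMod N) ≠ 1 := by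
    haveI : Fact (1 < N) := ⟨by omega⟩
    exact zero_ne_one
  have h10 : (1 : ZMod N) ≠ 0 := Ne.symm h01
  obtain ⟨ρ, hρ⟩ := hy
  obtain ⟨ρ', hρ'⟩ := hy'
  have hval : ∀ q, y q = 0 ∨ y q = 1 := by
    intro q; rw [hρ]; simp only [Function.comp]; split <;> simp
  have hval' : ∀ q, y' q = 0 ∨ y' q = 1 := by
    intro q; rw [hρ']; simp only [Function.comp]; split <;> simp
  set t : ZMod N → ℕ := fun u => (Finset.univ.filter fun q => a q = u ∧ y q = 1).card with ht
  set t' : ZMod N → ℕ := fun u => (Finset.univ.filter fun q => a q = u ∧ y' q = 1).card with ht'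
  -- generic key equation
  have keyeq : ∀ (w : Fin k → ZMod N), (∀ q, w q = 0 ∨ w q = 1) → ∀ v : ZMod N,
      (Finset.univ.filter fun q => a q + w q = v).card
        + (Finset.univ.filter fun q => a q = v ∧ w q = 1).card
      = (Finset.univ.filter fun q => a q = v - 1 ∧ w q = 1).card
        + (Finset.univ.filter fun q => a q = v).card := by
    intro w hw v
    have s1 : ((Finset.univ.filter fun q => a q + w q = v).filter fun q => w q = 1).card
        + ((Finset.univ.filter fun q => a q + w q = v).filter fun q => ¬ w q = 1).card
        = (Finset.univ.filter fun q => a q + w q = v).card :=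
      Finset.card_filter_add_card_filter_not (fun q => w q = 1)
    have s2 : ((Finset.univ.filter fun q => a q = v).filter fun q => w q = 1).card
        + ((Finset.univ.filter fun q => a q = v).filter fun q => ¬ w q = 1).card
        = (Finset.univ.filter fun q => a q = v).card :=
      Finset.card_filter_add_card_filter_not (fun q => w q = 1)
    have e1 : ((Finset.univ.filter fun q => a q + w q = v).filter fun q => w q = 1)
        = (Finset.univ.filter fun q => a q = v - 1 ∧ w q = 1) := by
      rw [Finset.filter_filter]
      apply Finset.filter_congr
      intro q _
      constructor
      · rintro ⟨hs, h1⟩; rw [h1] at hs; exact ⟨by rw [← hs]; ring, h1⟩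
      · rintro ⟨hs, h1⟩; rw [h1, hs]; exact ⟨by ring, rfl⟩
    have e2 : ((Finset.univ.filter fun q => a q + w q = v).filter fun q => ¬ w q = 1)
        = ((Finset.univ.filter fun q => a q = v).filter fun q => ¬ w q = 1) := by
      rw [Finset.filter_filter, Finset.filter_filter]
      apply Finset.filter_congr
      intro q _
      rcases hw q with h0 | h0
      · rw [h0]; simp [h01, h10]
      · rw [h0]; simp [h01, h10]
    rw [e1, e2] at s1
    rw [show ((Finset.univ.filter fun q => a q = v).filter fun q => w q = 1)
        = (Finset.univ.filter fun q => a q = v ∧ w q = 1) from Finset.filter_filter _ _ _] at s2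
    omega
  have eqy := keyeq y hval
  have eqy' := keyeq y' hval'
  -- t(v-1) + t'(v) = t'(v-1) + t(v)
  have key : ∀ v : ZMod N, t (v-1) + t' v = t' (v-1) + t v := by
    intro v
    have := hz v
    have e1 := eqy v
    have e2 := eqy' v
    simp only [ht, ht'] at *
    omega
  -- counts of ones
  have ones : ∀ (w : Fin k → ZMod N) (τ : Equiv.Perm (Fin k)),
      w = (fun i : Fin k => if (i : ℕ) < m then (1 : ZMod N) else 0) ∘ τ →
      (Finset.univ.filter fun q => w q = 1).card
        = (Finset.univ.filter fun q : Fin k =>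
            (if (q : ℕ) < m then (1 : ZMod N) else 0) = 1).card := by
    intro w τ hw
    rw [hw]
    exact cnt_comp τ (fun q => (if (q : ℕ) < m then (1 : ZMod N) else 0) = 1)
  have sum_t : ∀ (w : Fin k → ZMod N),
      ∑ v : ZMod N, (Finset.univ.filter fun q => a q = v ∧ w q = 1).card
        = (Finset.univ.filter fun q => w q = 1).card := by
    intro w
    rw [Finset.card_eq_sum_card_fiberwise (f := a) (t := Finset.univ) (fun x _ => mem_univ _)]
    apply Finset.sum_congr rfl
    intro v _
    rw [Finset.filter_filter]
    congr 1
    ext q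
    simp [and_comm]
  have sums : ∑ v : ZMod N, t v = ∑ v : ZMod N, t' v := by
    rw [sum_t y, sum_t y', ones y ρ hρ, ones y' ρ' hρ']
  -- constancy of d
  have dstep : ∀ v : ZMod N, (t (v-1) : ℤ) - t' (v-1) = (t v : ℤ) - t' v := by
    intro v; have := key v; omega
  have dnat : ∀ n : ℕ, (t (n : ZMod N) : ℤ) - t' (n : ZMod N) = (t 0 : ℤ) - t' 0 := by
    intro n
    induction n with
    | zero => simp
    | succ n ih =>
      have := dstep ((n : ZMod N) + 1)
      rw [add_sub_cancel_right] at this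
      push_cast
      rw [← this, ih]
  have dall : ∀ v : ZMod N, (t v : ℤ) - t' v = (t 0 : ℤ) - t' 0 := by
    intro v
    have : ((v.val : ℕ) : ZMod N) = v := ZMod.natCast_rightInverse v
    rw [← this]; exact dnat v.val
  have dzero : (t 0 : ℤ) - t' 0 = 0 := by
    have h1 : ∑ v : ZMod N, ((t v : ℤ) - t' v) = 0 := by
      rw [Finset.sum_sub_distrib, ← Nat.cast_sum, ← Nat.cast_sum, sums, sub_self]
    have h2 : ∑ v : ZMod N, ((t v : ℤ) - t' v)
        = (Fintype.card (ZMod N)) * ((t 0 : ℤ) - t' 0) := by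
      rw [Finset.sum_congr rfl (fun v _ => dall v), Finset.sum_const, Finset.card_univ,
        nsmul_eq_mul]
    rw [h2] at h1
    have hcard : (Fintype.card (ZMod N) : ℤ) ≠ 0 := by
      rw [ZMod.card]; exact_mod_cast (by omega : N ≠ 0)
    exact (mul_eq_zero.mp h1).resolve_left hcard
  have teq : ∀ v, t v = t' v := by
    intro v; have := dall v; rw [dzero] at this; omega
  -- fibers of the pair maps
  have fibers : ∀ w : ZMod N × ZMod N,
      (Finset.univ.filter fun q => (a q, y q) = w).card
        = (Finset.univ.filter fun q => (a q, y' q) = w).card := by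
    rintro ⟨u, wv⟩
    simp only [Prod.mk.injEq]
    rcases eq_or_ne wv 1 with rfl | hw1
    · exact teq u
    rcases eq_or_ne wv 0 with rfl | hw0
    · -- card with y = 0: B u - t u
      have s1 : ((Finset.univ.filter fun q => a q = u).filter fun q => y q = 1).card
          + ((Finset.univ.filter fun q => a q = u).filter fun q => ¬ y q = 1).card
          = (Finset.univ.filter fun q => a q = u).card :=
        Finset.card_filter_add_card_filter_not _
      have s2 : ((Finset.univ.filter fun q => a q = u).filter fun q => y' q = 1).card
          + ((Finset.univ.filter fun q => a q = u).filter fun q => ¬ y' q = 1).card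
          = (Finset.univ.filter fun q => a q = u).card :=
        Finset.card_filter_add_card_filter_not _
      have c1 : ((Finset.univ.filter fun q => a q = u).filter fun q => ¬ y q = 1)
          = Finset.univ.filter fun q => a q = u ∧ y q = 0 := by
        rw [Finset.filter_filter]
        apply Finset.filter_congr; intro q _
        rcases hval q with h0 | h0 <;> simp [h0, h01, h10]
      have c1' : ((Finset.univ.filter fun q => a q = u).filter fun q => ¬ y' q = 1)
          = Finset.univ.filter fun q => a q = u ∧ y' q = 0 := by
        rw [Finset.filter_filter]
        apply Finset.filter_congr; intro q _
        rcases hval' q with h0 | h0 <;> simp [h0, h01, h10]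
      have t1 : ((Finset.univ.filter fun q => a q = u).filter fun q => y q = 1).card = t u := by
        rw [Finset.filter_filter]
      have t2 : ((Finset.univ.filter fun q => a q = u).filter fun q => y' q = 1).card = t' u := by
        rw [Finset.filter_filter]
      rw [c1] at s1; rw [c1'] at s2
      rw [t1] at s1; rw [t2] at s2
      have := teq u
      omega
    · -- both empty
      rw [Finset.filter_false_of_mem, Finset.filter_false_of_mem]
      · intro q _; rintro ⟨-, h⟩; rcases hval' q with h0 | h0 <;> rw [h0] at h
        exacts [hw0 h.symm, hw1 h.symm]
      · intro q _; rintro ⟨-, h⟩; rcases hval q with h0 | h0 <;> rw [h0] at h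
        exacts [hw0 h.symm, hw1 h.symm]
  obtain ⟨σ, hσ⟩ := engine (fun q => (a q, y q)) (fun q => (a q, y' q)) fibers
  refine ⟨σ, funext fun q => ?_, funext fun q => ?_⟩
  · exact congrArg Prod.fst (congrFun hσ q)
  · exact congrArg Prod.snd (congrFun hσ q)

lemma cnt_ind {N k : ℕ} (hN : 2 ≤ N) (f g : Fin k → ZMod N)
    (hf : ∀ q, f q = 0 ∨ f q = 1) (hg : ∀ q, g q = 0 ∨ g q = 1)
    (h1 : (Finset.univ.filter fun q => f q = 1).card
        = (Finset.univ.filter fun q => g q = 1).card) :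
    ∀ v, (Finset.univ.filter fun q => f q = v).card
        = (Finset.univ.filter fun q => g q = v).card := by
  classical
  haveI : NeZero N := ⟨by omega⟩
  have h01 : (0 : ZMod N) ≠ 1 := by
    haveI : Fact (1 < N) := ⟨by omega⟩
    exact zero_ne_one
  intro v
  rcases eq_or_ne v 1 with rfl | hv1
  · exact h1
  rcases eq_or_ne v 0 with rfl | hv0
  · have s1 : (Finset.univ.filter fun q => f q = 1).card
        + (Finset.univ.filter fun q => ¬ f q = 1).card = k :=
      (Finset.card_filter_add_card_filter_not _).trans (by simp)
    have s2 : (Finset.univ.filter fun q => g q = 1).card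
        + (Finset.univ.filter fun q => ¬ g q = 1).card = k :=
      (Finset.card_filter_add_card_filter_not _).trans (by simp)
    have c1 : (Finset.univ.filter fun q => f q = 0)
        = (Finset.univ.filter fun q => ¬ f q = 1) := by
      apply Finset.filter_congr; intro q _
      rcases hf q with h0 | h0 <;> simp [h0, h01, Ne.symm h01]
    have c2 : (Finset.univ.filter fun q => g q = 0)
        = (Finset.univ.filter fun q => ¬ g q = 1) := by
      apply Finset.filter_congr; intro q _
      rcases hg q with h0 | h0 <;> simp [h0, h01, Ne.symm h01]
    rw [c1, c2]; omega
  · rw [Finset.filter_false_of_mem, Finset.filter_false_of_mem]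
    · intro q _; rcases hg q with h0 | h0 <;> rw [h0] <;> [exact fun h => hv0 h.symm;
        exact fun h => hv1 h.symm]
    · intro q _; rcases hf q with h0 | h0 <;> rw [h0] <;> [exact fun h => hv0 h.symm;
        exact fun h => hv1 h.symm]

lemma existence {N k m : ℕ} (hN : 2 ≤ N) (hk : 1 ≤ k) (hm : m ≤ k)
    (pμ pν : Fin N → ℕ)
    (hμa : ∀ i j : Fin N, i ≤ j → pμ j ≤ pμ i)
    (hμk : ∀ i, pμ i ≤ k)
    (νbar : Fin N → ℕ)
    (hba : ∀ i j : Fin N, i ≤ j → νbar j ≤ νbar i) (hbk : ∀ i, νbar i ≤ k)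
    (hbμ : ∀ i, pμ i ≤ νbar i) (hsum : (∑ i, (νbar i - pμ i)) = m)
    (hstrip : ∀ i j : Fin N, (i : ℕ) + 1 = (j : ℕ) → νbar j ≤ pμ i)
    (hconst : ∃ c : ℕ, ∀ i, νbar i = pν i + c) :
    ∃ y : Fin k → ZMod N,
      (∃ ρ : Equiv.Perm (Fin k),
        y = (fun i : Fin k => if (i : ℕ) < m then (1 : ZMod N) else 0) ∘ ρ) ∧
      (∃ τ : Equiv.Perm (Fin k), tupleOf k pμ + y = tupleOf k pν ∘ τ) := by
  classical
  haveI : NeZero N := ⟨by omega⟩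
  have h01 : (0 : ZMod N) ≠ 1 := by
    haveI : Fact (1 < N) := ⟨by omega⟩
    exact zero_ne_one
  obtain ⟨cst, hc⟩ := hconst
  set A : Fin k → ℕ := fun q => (Finset.univ.filter fun i : Fin N => (q : ℕ) < pμ i).card
    with hA
  set B : Fin k → ℕ := fun q => (Finset.univ.filter fun i : Fin N => (q : ℕ) < νbar i).card
    with hB
  have hlow : ∀ q, A q ≤ B q := by
    intro q
    apply Finset.card_le_card
    intro i hi
    simp only [Finset.mem_filter, Finset.mem_univ, true_and] at hi ⊢
    exact lt_of_lt_of_le hi (hbμ i)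
  have hBN : ∀ q, B q ≤ N := by
    intro q
    calc B q ≤ (Finset.univ : Finset (Fin N)).card := Finset.card_filter_le _ _
      _ = N := by simp
  have hhigh : ∀ q, B q ≤ A q + 1 := by
    intro q
    by_contra hcon
    push_neg at hcon
    have h2N : B q ≤ N := hBN q
    have hBq2 : 2 ≤ B q := by omega
    set i0 : Fin N := ⟨B q - 2, by omega⟩
    set j0 : Fin N := ⟨B q - 1, by omega⟩
    have hj : (j0 : ℕ) < B q := by simp only [j0]; omega
    have hq1 : (q : ℕ) < νbar j0 := (duality hba j0 (q : ℕ)).mp hj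
    have hq2 : νbar j0 ≤ pμ i0 := hstrip i0 j0 (by simp only [i0, j0]; omega)
    have hq3 : (i0 : ℕ) < A q := (duality hμa i0 (q : ℕ)).mpr (by omega)
    simp only [i0] at hq3
    omega
  set g : Fin k → ℕ := fun q => B q - A q with hg
  have hg1 : ∀ q, g q ≤ 1 := by intro q; have := hhigh q; have := hlow q; simp only [hg]; omega
  set y : Fin k → ZMod N := fun q => (g q : ZMod N) with hy
  have hyval : ∀ q, y q = 0 ∨ y q = 1 := by
    intro q
    have := hg1 q
    interval_cases h : g q
    · left; simp [hy, h]
    · right; simp [hy, h]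
  have hsumg : ∑ q, g q = m := by
    simp only [hg]
    rw [Finset.sum_tsub_distrib _ (fun q _ => hlow q)]
    rw [hB, hA]
    rw [colsum νbar hbk, colsum pμ hμk]
    rw [Finset.sum_tsub_distrib _ (fun i _ => hbμ i)] at hsum
    exact hsum
  have hones : (Finset.univ.filter fun q => y q = 1).card = m := by
    have e1 : (Finset.univ.filter fun q => y q = 1)
        = (Finset.univ.filter fun q => g q = 1) := by
      apply Finset.filter_congr; intro q _
      have := hg1 q
      interval_cases h : g q
      · simp [hy, h, h01, Ne.symm h01]
      · simp [hy, h]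
    rw [e1]
    have e2 : (Finset.univ.filter fun q => g q = 1).card = ∑ q, g q := by
      rw [Finset.card_filter]
      apply Finset.sum_congr rfl
      intro q _
      have := hg1 q
      interval_cases h : g q <;> simp [h]
    rw [e2, hsumg]
  have hbval : ∀ q : Fin k, (if (q : ℕ) < m then (1 : ZMod N) else 0) = 0
      ∨ (if (q : ℕ) < m then (1 : ZMod N) else 0) = 1 := by
    intro q; split <;> simp
  have hbones : (Finset.univ.filter fun q : Fin k =>
      (if (q : ℕ) < m then (1 : ZMod N) else 0) = 1).card = m := by
    have e1 : (Finset.univ.filter fun q : Fin k =>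
        (if (q : ℕ) < m then (1 : ZMod N) else 0) = 1)
        = (Finset.univ.filter fun q : Fin k => (q : ℕ) < m) := by
      apply Finset.filter_congr; intro q _
      constructor
      · intro hq; by_contra hqm; rw [if_neg hqm] at hq; exact h01 hq
      · intro hq; rw [if_pos hq]
    rw [e1, cardlt k hm]
  obtain ⟨ρ, hρ⟩ := engine (fun i : Fin k => if (i : ℕ) < m then (1 : ZMod N) else 0) y
    (cnt_ind hN _ y hbval hyval (by rw [hbones, hones]))
  refine ⟨y, ⟨ρ, hρ.symm⟩, ?_⟩
  -- now the rotation
  have hcstk : cst ≤ k := by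
    have h1 := hbk ⟨0, by omega⟩
    have h2 := hc ⟨0, by omega⟩
    omega
  set F : Fin k → Fin k := fun q =>
    if h : (q : ℕ) < cst then ⟨(q : ℕ) + (k - cst), by omega⟩
    else ⟨(q : ℕ) - cst, by have := q.isLt; omega⟩ with hF
  have hFval : ∀ q : Fin k, (F q : ℕ)
      = if (q : ℕ) < cst then (q : ℕ) + (k - cst) else (q : ℕ) - cst := by
    intro q
    simp only [hF]
    split_ifs <;> rfl
  have hinj : Function.Injective F := by
    intro q1 q2 heq
    have hv := congrArg Fin.val heq
    rw [hFval q1, hFval q2] at hv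
    have h1 := q1.isLt
    have h2 := q2.isLt
    apply Fin.ext
    split_ifs at hv <;> omega
  set τ : Equiv.Perm (Fin k) := Equiv.ofBijective F (Finite.injective_iff_bijective.mp hinj)
    with hτdef
  refine ⟨τ, funext fun q => ?_⟩
  have hτq : τ q = F q := rfl
  have lhs : (tupleOf k pμ + y) q = ((B q : ℕ) : ZMod N) := by
    have h1 : A q + g q = B q := by have := hlow q; simp only [hg]; omega
    calc (tupleOf k pμ + y) q = ((A q : ZMod N)) + ((g q : ZMod N)) := rfl
      _ = ((A q + g q : ℕ) : ZMod N) := by push_cast; ring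
      _ = _ := by rw [h1]
  rw [lhs]
  show ((B q : ℕ) : ZMod N) = tupleOf k pν (τ q)
  simp only [tupleOf]
  by_cases hq : (q : ℕ) < cst
  · have hBq : B q = N := by
      have h2 : (Finset.univ.filter fun i : Fin N => (q : ℕ) < νbar i) = Finset.univ := by
        apply Finset.filter_true_of_mem
        intro i _
        have := hc i
        omega
      simp only [hB, h2]
      simp
    have hCz : (Finset.univ.filter fun i : Fin N => ((τ q : Fin k) : ℕ) < pν i) = ∅ := by
      apply Finset.filter_false_of_mem
      intro i _
      rw [hτq, hFval q, if_pos hq]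
      have h1 := hc i
      have h2 := hbk i
      omega
    rw [hBq, hCz]
    simp [ZMod.natCast_self]
  · have hBeq : B q = (Finset.univ.filter fun i : Fin N => ((τ q : Fin k) : ℕ) < pν i).card := by
      simp only [hB]
      congr 1
      apply Finset.filter_congr
      intro i _
      rw [hτq, hFval q, if_neg hq]
      have := hc i
      constructor <;> intro h <;> omega
    rw [hBeq]

theorem stmt19 (N k m : ℕ) (hN : 2 ≤ N) (hk : 1 ≤ k) (hm : m ≤ k)
    (pμ pν : Fin N → ℕ)
    (hμa : ∀ i j : Fin N, i ≤ j → pμ j ≤ pμ i)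
    (hμlast : pμ ⟨N - 1, by omega⟩ = 0) (hμk : ∀ i, pμ i ≤ k)
    (hνa : ∀ i j : Fin N, i ≤ j → pν j ≤ pν i)
    (hνlast : pν ⟨N - 1, by omega⟩ = 0) (hνk : ∀ i, pν i ≤ k) :
    ((∃ νbar : Fin N → ℕ,
        (∀ i j : Fin N, i ≤ j → νbar j ≤ νbar i) ∧ (∀ i, νbar i ≤ k) ∧
        (∀ i, pμ i ≤ νbar i) ∧ (∑ i, (νbar i - pμ i)) = m ∧
        (∀ i j : Fin N, (i : ℕ) + 1 = (j : ℕ) → νbar j ≤ pμ i) ∧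
        ∃ c : ℕ, ∀ i, νbar i = pν i + c) →
      Mcoef (tupleOf k pμ) (fun i => if (i : ℕ) < m then 1 else 0) (tupleOf k pν) = 1) ∧
    ((¬ ∃ νbar : Fin N → ℕ,
        (∀ i j : Fin N, i ≤ j → νbar j ≤ νbar i) ∧ (∀ i, νbar i ≤ k) ∧
        (∀ i, pμ i ≤ νbar i) ∧ (∑ i, (νbar i - pμ i)) = m ∧
        (∀ i j : Fin N, (i : ℕ) + 1 = (j : ℕ) → νbar j ≤ pμ i) ∧
        ∃ c : ℕ, ∀ i, νbar i = pν i + c) →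
      Mcoef (tupleOf k pμ) (fun i => if (i : ℕ) < m then 1 else 0) (tupleOf k pν) = 0) := by
  classical
  -- canonicalization of a triple
  have canon : ∀ p : Triples (tupleOf k pμ) (fun i : Fin k => if (i : ℕ) < m then (1 : ZMod N) else 0) (tupleOf k pν),
      ∃ yy : Fin k → ZMod N,
      (∃ ρ : Equiv.Perm (Fin k),
        yy = (fun i : Fin k => if (i : ℕ) < m then (1 : ZMod N) else 0) ∘ ρ) ∧
      (∃ τ : Equiv.Perm (Fin k), tupleOf k pμ + yy = tupleOf k pν ∘ τ) ∧
      (∃ τ₁ : Equiv.Perm (Fin k), p.1.1 = tupleOf k pμ ∘ τ₁ ∧ p.1.2.1 = yy ∘ τ₁ ∧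
        p.1.2.2 = (tupleOf k pμ + yy) ∘ τ₁) := by
    rintro ⟨⟨x, y, z⟩, ⟨τ₁, hx⟩, ⟨ρ₂, hy⟩, ⟨τ₃, hz⟩, hsum⟩
    dsimp only at hx hy hz hsum
    refine ⟨y ∘ τ₁.symm, ⟨τ₁.symm.trans ρ₂, ?_⟩, ⟨τ₁.symm.trans τ₃, ?_⟩, τ₁, ?_, ?_, ?_⟩
    · funext q
      simp only [Function.comp, Equiv.trans_apply]
      rw [hy]; rfl
    · funext q
      have h1 : x (τ₁.symm q) + y (τ₁.symm q) = z (τ₁.symm q) := congrFun hsum (τ₁.symm q)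
      have h2 : x (τ₁.symm q) = tupleOf k pμ q := by
        rw [hx]; simp only [Function.comp]; rw [Equiv.apply_symm_apply]
      simp only [Pi.add_apply, Function.comp, Equiv.trans_apply]
      rw [← h2, h1, hz]; rfl
    · exact hx
    · funext q
      simp only [Function.comp, Equiv.symm_apply_apply]
    · funext q
      simp only [Pi.add_apply, Function.comp, Equiv.symm_apply_apply]
      have h1 : x q + y q = z q := congrFun hsum q
      have h2 : x q = tupleOf k pμ (τ₁ q) := by rw [hx]; rfl
      rw [← h1, h2]
  -- any two triples are related
  have hrel : ∀ p q : Triples (tupleOf k pμ) (fun i : Fin k => if (i : ℕ) < m then (1 : ZMod N) else 0) (tupleOf k pν),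
      ∃ σ : Equiv.Perm (Fin k),
        q.1.1 = p.1.1 ∘ σ ∧ q.1.2.1 = p.1.2.1 ∘ σ ∧ q.1.2.2 = p.1.2.2 ∘ σ := by
    intro p q
    obtain ⟨yy, hyy, ⟨τ, hτ⟩, ⟨τ₁, hp1, hp2, hp3⟩⟩ := canon p
    obtain ⟨yy', hyy', ⟨τ', hτ'⟩, ⟨τ₂, hq1, hq2, hq3⟩⟩ := canon q
    have cnteq : ∀ (w : Fin k → ZMod N) (s : Equiv.Perm (Fin k)),
        tupleOf k pμ + w = tupleOf k pν ∘ s →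
        ∀ v : ZMod N, (Finset.univ.filter fun r => tupleOf k pμ r + w r = v).card
          = (Finset.univ.filter fun r => tupleOf k pν r = v).card := by
      intro w s hs v
      have h1 : (Finset.univ.filter fun r => tupleOf k pμ r + w r = v)
          = (Finset.univ.filter fun r => tupleOf k pν (s r) = v) := by
        apply Finset.filter_congr
        intro r _
        have := congrFun hs r
        simp only [Pi.add_apply, Function.comp] at this
        rw [this]
      rw [h1]
      exact cnt_comp s (fun r => tupleOf k pν r = v)
    obtain ⟨σ0, hσa, hσy⟩ := uniq (m := m) hN (tupleOf k pμ) yy yy' hyy hyy'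
      (fun v => (cnteq yy τ hτ v).trans (cnteq yy' τ' hτ' v).symm)
    refine ⟨(τ₂.trans σ0).trans τ₁.symm, ?_, ?_, ?_⟩
    · rw [hq1, hp1]
      funext r
      simp only [Function.comp, Equiv.trans_apply, Equiv.apply_symm_apply]
      exact (congrFun hσa (τ₂ r)).symm
    · rw [hq2, hp2]
      funext r
      simp only [Function.comp, Equiv.trans_apply, Equiv.apply_symm_apply]
      exact (congrFun hσy (τ₂ r)).symm
    · rw [hq3, hp3]
      funext r
      simp only [Pi.add_apply, Function.comp, Equiv.trans_apply, Equiv.apply_symm_apply]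
      rw [← congrFun hσa (τ₂ r), ← congrFun hσy (τ₂ r)]
      rfl
  have hsub : Subsingleton (Quot (fun p q : Triples (tupleOf k pμ)
      (fun i : Fin k => if (i : ℕ) < m then (1 : ZMod N) else 0) (tupleOf k pν) =>
      ∃ σ : Equiv.Perm (Fin k),
        q.1.1 = p.1.1 ∘ σ ∧ q.1.2.1 = p.1.2.1 ∘ σ ∧ q.1.2.2 = p.1.2.2 ∘ σ)) := by
    constructor
    intro x y
    induction x using Quot.ind with | _ p =>
    induction y using Quot.ind with | _ q =>
    exact Quot.sound (hrel p q)
  constructor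
  · rintro ⟨νbar, hba, hbk, hbμ, hsum, hstrip, hconst⟩
    obtain ⟨y, hy, ⟨τ, hτ⟩⟩ := existence hN hk hm pμ pν hμa hμk νbar hba hbk hbμ hsum hstrip hconst
    have tt : Triples (tupleOf k pμ) (fun i : Fin k => if (i : ℕ) < m then (1 : ZMod N) else 0)
        (tupleOf k pν) :=
      ⟨(tupleOf k pμ, y, tupleOf k pμ + y), ⟨Equiv.refl _, rfl⟩, hy, ⟨τ, hτ⟩, rfl⟩
    rw [Mcoef, Nat.card_eq_one_iff_unique]
    exact ⟨hsub, ⟨Quot.mk _ tt⟩⟩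
  · intro hno
    have hempty : IsEmpty (Triples (tupleOf k pμ)
        (fun i : Fin k => if (i : ℕ) < m then (1 : ZMod N) else 0) (tupleOf k pν)) := by
      constructor
      intro p
      obtain ⟨yy, hyy, hτ, -⟩ := canon p
      exact hno (reconstruct hN hk hm pμ pν hμa hμlast hμk hνa hνlast hνk yy hyy hτ)
    rw [Mcoef]
    have : IsEmpty (Quot (fun p q : Triples (tupleOf k pμ)
        (fun i : Fin k => if (i : ℕ) < m then (1 : ZMod N) else 0) (tupleOf k pν) =>
        ∃ σ : Equiv.Perm (Fin k),
          q.1.1 = p.1.1 ∘ σ ∧ q.1.2.1 = p.1.2.1 ∘ σ ∧ q.1.2.2 = p.1.2.2 ∘ σ)) :=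
      ⟨Quot.ind (fun p => hempty.elim p)⟩
    exact Nat.card_of_isEmpty
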